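/- For the (ε,σ)-channel with fixed input distribution Bernoulli(q) (0<q<1) and fixed σ>0, the mutual information C_q(ε,σ) = I(X;Y) is a non-increasing function of ε on [0,1]; in particular C_q(1,σ) ≤ C_q(ε,σ) ≤ C_q(0,σ) for all ε ∈ [0,1]. -/

import Mathlib

open MeasureTheory

/-- Gaussian density with standard deviation `σ` and mean `m`, evaluated at `y`. -/
noncomputable def gauss (σ y m : ℝ) : ℝ :=
  1 / (Real.sqrt (2 * Real.pi) * σ) * Real.exp (-(y - m) ^ 2 / (2 * σ ^ 2))

/-- Channel transition density of the `(ε,σ)`-channel: input `1` gives `N(R1,σ²)`;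
input `0` gives the mixture `ε·N(R0',σ²) + (1−ε)·N(R0,σ²)`. -/
noncomputable def W (R0 R0' R1 σ ε : ℝ) (x : Bool) (y : ℝ) : ℝ :=
  if x then gauss σ y R1 else ε * gauss σ y R0' + (1 - ε) * gauss σ y R0

/-- Mutual information `C_q(ε,σ) = I(X;Y)` of the `(ε,σ)`-channel with Bernoulli(q) input. -/
noncomputable def Cq (R0 R0' R1 σ q ε : ℝ) : ℝ :=
  ∫ y : ℝ,
    (q * W R0 R0' R1 σ ε true y *
        Real.logb 2 (W R0 R0' R1 σ ε true y /
          (q * W R0 R0' R1 σ ε true y + (1 - q) * W R0 R0' R1 σ ε false y)) +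
      (1 - q) * W R0 R0' R1 σ ε false y *
        Real.logb 2 (W R0 R0' R1 σ ε false y /
          (q * W R0 R0' R1 σ ε true y + (1 - q) * W R0 R0' R1 σ ε false y)))

/-! ### Auxiliary lemmas about the Gaussian density -/

lemma gauss_pos {σ : ℝ} (hσ : 0 < σ) (y m : ℝ) : 0 < gauss σ y m := by
  unfold gauss
  have : 0 < Real.sqrt (2 * Real.pi) := Real.sqrt_pos.2 (by positivity)
  positivity

lemma Kc_pos {σ : ℝ} (hσ : 0 < σ) : 0 < 1 / (Real.sqrt (2 * Real.pi) * σ) := by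
  have : 0 < Real.sqrt (2 * Real.pi) := Real.sqrt_pos.2 (by positivity)
  positivity

lemma gauss_le {σ : ℝ} (hσ : 0 < σ) (y m : ℝ) :
    gauss σ y m ≤ 1 / (Real.sqrt (2 * Real.pi) * σ) := by
  unfold gauss
  have h2 : Real.exp (-(y - m) ^ 2 / (2 * σ ^ 2)) ≤ 1 := by
    rw [← Real.exp_zero]
    apply Real.exp_le_exp.2
    rw [neg_div]
    have : (0:ℝ) ≤ (y-m)^2 / (2*σ^2) := by positivity
    linarith
  nlinarith [Kc_pos (σ := σ) hσ]

lemma log_gauss_eq {σ : ℝ} (hσ : 0 < σ) (y m : ℝ) :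
    Real.log (gauss σ y m) =
      Real.log (1 / (Real.sqrt (2 * Real.pi) * σ)) - (y - m) ^ 2 / (2 * σ ^ 2) := by
  unfold gauss
  rw [Real.log_mul (Kc_pos hσ).ne' (Real.exp_ne_zero _), Real.log_exp, neg_div]
  ring

lemma abs_log_gauss_le {σ : ℝ} (hσ : 0 < σ) (y m : ℝ) :
    |Real.log (gauss σ y m)| ≤
      |Real.log (1 / (Real.sqrt (2 * Real.pi) * σ))| + (y - m) ^ 2 / (2 * σ ^ 2) := by
  rw [log_gauss_eq hσ, sub_eq_add_neg]
  refine (abs_add_le _ _).trans ?_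
  rw [abs_neg]
  have : |(y - m) ^ 2 / (2 * σ ^ 2)| = (y - m) ^ 2 / (2 * σ ^ 2) := abs_of_nonneg (by positivity)
  simp [this]

lemma measurable_gauss (σ m : ℝ) : Measurable (fun y => gauss σ y m) := by
  unfold gauss
  exact measurable_const.mul ((((measurable_id'.sub_const m).pow_const 2).neg.div_const _).exp)

lemma gauss_fun_eq (σ m : ℝ) : (fun y => gauss σ y m) =
    fun y => 1 / (Real.sqrt (2 * Real.pi) * σ) * Real.exp (-(1/(2*σ^2)) * (y - m) ^ 2) := by
  funext y
  unfold gauss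
  ring_nf

lemma integrable_gauss {σ : ℝ} (hσ : 0 < σ) (m : ℝ) :
    Integrable (fun y => gauss σ y m) := by
  have hb : (0:ℝ) < 1 / (2 * σ ^ 2) := by positivity
  rw [gauss_fun_eq σ m]
  exact ((integrable_exp_neg_mul_sq hb).comp_sub_right m).const_mul _

lemma integrable_gauss_sq {σ : ℝ} (hσ : 0 < σ) (m ρ : ℝ) :
    Integrable (fun y => gauss σ y m * (y - ρ) ^ 2) := by
  have hb : (0:ℝ) < 1 / (2 * σ ^ 2) := by positivity
  have h2 : Integrable (fun x : ℝ => x ^ 2 * Real.exp (-(1 / (2 * σ ^ 2)) * x ^ 2)) := by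
    have := integrable_rpow_mul_exp_neg_mul_sq hb (s := 2) (by norm_num)
    refine this.congr (ae_of_all _ fun x => ?_)
    norm_num
  have hgm : Integrable (fun y => gauss σ y m * (y - m) ^ 2) := by
    have h := ((h2.comp_sub_right m).const_mul (1 / (Real.sqrt (2 * Real.pi) * σ)))
    refine h.congr (ae_of_all _ fun y => ?_)
    simp only
    unfold gauss
    ring_nf
  have hdom : Integrable (fun y => 2 * (gauss σ y m * (y - m) ^ 2)
      + (2 * (m - ρ) ^ 2) * gauss σ y m) :=
    (hgm.const_mul 2).add ((integrable_gauss hσ m).const_mul _)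
  refine hdom.mono' ((measurable_gauss σ m).mul
    (((measurable_id'.sub_const ρ).pow_const 2))).aestronglyMeasurable
    (ae_of_all _ fun y => ?_)
  have hg := gauss_pos hσ y m
  rw [Real.norm_eq_abs, abs_of_nonneg (by positivity)]
  nlinarith [sq_nonneg (y - m + (m - ρ)), sq_nonneg (y - m - (m - ρ)), sq_nonneg (y-m),
    sq_nonneg (m-ρ)]

/-- Monotone likelihood ratio for Gaussians with ordered means. -/
lemma gauss_mlr {σ : ℝ} (hσ : 0 < σ) {a b y1 y2 : ℝ} (hab : a ≤ b) (h12 : y1 ≤ y2) :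
    gauss σ y2 a * gauss σ y1 b ≤ gauss σ y1 a * gauss σ y2 b := by
  unfold gauss
  rw [mul_mul_mul_comm, ← Real.exp_add, mul_mul_mul_comm, ← Real.exp_add]
  apply mul_le_mul_of_nonneg_left _ (by positivity)
  apply Real.exp_le_exp.2
  rw [← add_div, ← add_div, div_le_div_iff₀ (by positivity) (by positivity)]
  nlinarith [mul_nonneg (sub_nonneg.2 h12) (sub_nonneg.2 hab), sq_nonneg σ]

/-- Reflection symmetry of a pair of Gaussians about the midpoint of their means. -/
lemma gauss_reflect {σ a b c : ℝ} (hc : a + b = 2 * c) (u : ℝ) :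
    gauss σ (c - u) b = gauss σ (c + u) a := by
  unfold gauss
  rw [show c - u - b = -(c + u - a) by linarith, neg_sq]

/-- To the right of the midpoint the Gaussian with the larger mean dominates. -/
lemma gauss_right_ge {σ : ℝ} (hσ : 0 < σ) {a b c u : ℝ} (hab : a ≤ b) (hc : a + b = 2 * c)
    (hu : 0 ≤ u) : gauss σ (c + u) a ≤ gauss σ (c + u) b := by
  have hb : b = 2 * c - a := by linarith
  subst hb
  unfold gauss
  apply mul_le_mul_of_nonneg_left _ (by positivity)
  apply Real.exp_le_exp.2
  rw [div_le_div_iff₀ (by positivity) (by positivity)]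
  nlinarith [mul_nonneg (mul_nonneg hu (sub_nonneg.2 hab)) (sq_nonneg σ)]

/-! ### The two-term log-sum inequality and the pointwise convexity inequality -/

lemma log_sum_aux {u v1 v2 : ℝ} (hu : 0 < u) (h1 : 0 < v1) (h2 : 0 < v2) :
    (u + v1) * (Real.log (u + v1) - Real.log (u + v2)) ≤
      v1 * (Real.log v1 - Real.log v2) := by
  have hM1 : (0:ℝ) < u + v1 := by linarith
  have hM2 : (0:ℝ) < u + v2 := by linarith
  have k1 : Real.log (u + v1) - Real.log (u + v2) ≤ (u + v1) / (u + v2) - 1 := by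
    rw [← Real.log_div hM1.ne' hM2.ne']
    exact Real.log_le_sub_one_of_pos (by positivity)
  have k1' : (u + v2) * (Real.log (u + v1) - Real.log (u + v2)) ≤ v1 - v2 := by
    have := mul_le_mul_of_nonneg_left k1 hM2.le
    have heq : (u + v2) * ((u + v1) / (u + v2) - 1) = v1 - v2 := by
      field_simp
      ring
    linarith [heq ▸ this]
  have k2 : Real.log (u + v1) - Real.log (u + v2) - (Real.log v1 - Real.log v2)
      ≤ ((u + v1) * v2) / ((u + v2) * v1) - 1 := by
    have hlog : Real.log (((u + v1) * v2) / ((u + v2) * v1)) =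
        Real.log (u + v1) + Real.log v2 - (Real.log (u + v2) + Real.log v1) := by
      rw [Real.log_div (by positivity) (by positivity), Real.log_mul hM1.ne' h2.ne',
        Real.log_mul hM2.ne' h1.ne']
    have := Real.log_le_sub_one_of_pos
      (show (0:ℝ) < ((u + v1) * v2) / ((u + v2) * v1) by positivity)
    rw [hlog] at this
    linarith
  have k2' : ((u + v2) * v1) *
      (Real.log (u + v1) - Real.log (u + v2) - (Real.log v1 - Real.log v2))
      ≤ (u + v1) * v2 - (u + v2) * v1 := by
    have := mul_le_mul_of_nonneg_left k2 (by positivity : (0:ℝ) ≤ (u + v2) * v1)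
    have heq : ((u + v2) * v1) * (((u + v1) * v2) / ((u + v2) * v1) - 1)
        = (u + v1) * v2 - (u + v2) * v1 := by
      field_simp
    linarith [heq ▸ this]
  have hfin : (u + v2) * ((u + v1) * (Real.log (u + v1) - Real.log (u + v2)))
      ≤ (u + v2) * (v1 * (Real.log v1 - Real.log v2)) := by
    nlinarith [mul_le_mul_of_nonneg_left k1' hu.le, k2']
  exact le_of_mul_le_mul_left hfin hM2

/-- Pointwise convexity (gradient) inequality for the mutual-information integrand. -/
lemma pointwise_convex {q G A1 A2 : ℝ} (hq0 : 0 < q) (hq1 : q < 1)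
    (hG : 0 < G) (hA1 : 0 < A1) (hA2 : 0 < A2) :
    (1 - q) * (A1 - A2) * (Real.log A2 - Real.log (q * G + (1 - q) * A2)) ≤
      (q * G * (Real.log G - Real.log (q * G + (1 - q) * A1)) +
        (1 - q) * A1 * (Real.log A1 - Real.log (q * G + (1 - q) * A1))) -
      (q * G * (Real.log G - Real.log (q * G + (1 - q) * A2)) +
        (1 - q) * A2 * (Real.log A2 - Real.log (q * G + (1 - q) * A2))) := by
  have hu : 0 < q * G := by positivity
  have hv1 : 0 < (1 - q) * A1 := by nlinarith
  have hv2 : 0 < (1 - q) * A2 := by nlinarith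
  have hls := log_sum_aux hu hv1 hv2
  have e1 : Real.log ((1 - q) * A1) = Real.log (1 - q) + Real.log A1 :=
    Real.log_mul (by linarith) hA1.ne'
  have e2 : Real.log ((1 - q) * A2) = Real.log (1 - q) + Real.log A2 :=
    Real.log_mul (by linarith) hA2.ne'
  rw [e1, e2] at hls
  nlinarith [hls]

/-! ### The densities and the integrand, in convenient form -/

/-- the mixture density for input `0` -/
noncomputable def avf (R0 R0' σ ε y : ℝ) : ℝ :=
  ε * gauss σ y R0' + (1 - ε) * gauss σ y R0

/-- the output density -/
noncomputable def mvf (R0 R0' R1 σ q ε y : ℝ) : ℝ :=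
  q * gauss σ y R1 + (1 - q) * avf R0 R0' σ ε y

/-- the mutual-information integrand -/
noncomputable def Ff (R0 R0' R1 σ q ε y : ℝ) : ℝ :=
  q * gauss σ y R1 * Real.logb 2 (gauss σ y R1 / mvf R0 R0' R1 σ q ε y) +
    (1 - q) * avf R0 R0' σ ε y * Real.logb 2 (avf R0 R0' σ ε y / mvf R0 R0' R1 σ q ε y)

lemma Cq_eq (R0 R0' R1 σ q ε : ℝ) :
    Cq R0 R0' R1 σ q ε = ∫ y : ℝ, Ff R0 R0' R1 σ q ε y := rfl

section main

variable {R0 R0' R1 σ q : ℝ}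

lemma avf_pos (hσ : 0 < σ) {ε : ℝ} (h0 : 0 ≤ ε) (h1 : ε ≤ 1) (y : ℝ) :
    0 < avf R0 R0' σ ε y := by
  unfold avf
  have hx := gauss_pos (m := R0') hσ y
  have hy := gauss_pos (m := R0) hσ y
  have h1' : 0 ≤ 1 - ε := by linarith
  rcases le_total (gauss σ y R0') (gauss σ y R0) with hc | hc
  · nlinarith [mul_nonneg h1' (sub_nonneg.2 hc)]
  · nlinarith [mul_nonneg h0 (sub_nonneg.2 hc)]

lemma avf_le_K (hσ : 0 < σ) {ε : ℝ} (h0 : 0 ≤ ε) (h1 : ε ≤ 1) (y : ℝ) :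
    avf R0 R0' σ ε y ≤ 1 / (Real.sqrt (2 * Real.pi) * σ) := by
  unfold avf
  have h1' : 0 ≤ 1 - ε := by linarith
  nlinarith [mul_le_mul_of_nonneg_left (gauss_le (m := R0') hσ y) h0,
    mul_le_mul_of_nonneg_left (gauss_le (m := R0) hσ y) h1']

lemma avf_le_add (hσ : 0 < σ) {ε : ℝ} (h0 : 0 ≤ ε) (h1 : ε ≤ 1) (y : ℝ) :
    avf R0 R0' σ ε y ≤ gauss σ y R0' + gauss σ y R0 := by
  unfold avf
  have hx := gauss_pos (m := R0') hσ y
  have hy := gauss_pos (m := R0) hσ y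
  have h1' : 0 ≤ 1 - ε := by linarith
  rcases le_total (gauss σ y R0') (gauss σ y R0) with hc | hc
  · nlinarith [mul_nonneg h1' (sub_nonneg.2 hc)]
  · nlinarith [mul_nonneg h0 (sub_nonneg.2 hc)]

lemma mvf_pos (hσ : 0 < σ) (hq0 : 0 < q) (hq1 : q < 1) {ε : ℝ} (h0 : 0 ≤ ε) (h1 : ε ≤ 1)
    (y : ℝ) : 0 < mvf R0 R0' R1 σ q ε y := by
  unfold mvf
  nlinarith [gauss_pos (m := R1) hσ y, avf_pos (R0 := R0) (R0' := R0') hσ h0 h1 y]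

lemma mvf_le_K (hσ : 0 < σ) (hq0 : 0 < q) (hq1 : q < 1) {ε : ℝ} (h0 : 0 ≤ ε) (h1 : ε ≤ 1)
    (y : ℝ) : mvf R0 R0' R1 σ q ε y ≤ 1 / (Real.sqrt (2 * Real.pi) * σ) := by
  unfold mvf
  nlinarith [gauss_le (m := R1) hσ y, avf_le_K (R0 := R0) (R0' := R0') hσ h0 h1 y,
    gauss_pos (m := R1) hσ y, avf_pos (R0 := R0) (R0' := R0') hσ h0 h1 y]

/-- `|log avf|` has at most quadratic growth. -/
lemma abs_log_avf_le (hσ : 0 < σ) {ε : ℝ} (h0 : 0 ≤ ε) (h1 : ε ≤ 1) (y : ℝ) :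
    |Real.log (avf R0 R0' σ ε y)| ≤
      |Real.log (1 / (Real.sqrt (2 * Real.pi) * σ))| +
        ((y - R0') ^ 2 + (y - R0) ^ 2) / (2 * σ ^ 2) := by
  have hK := Kc_pos (σ := σ) hσ
  have hA := avf_pos (R0 := R0) (R0' := R0') hσ h0 h1 y
  have hup : Real.log (avf R0 R0' σ ε y) ≤ |Real.log (1 / (Real.sqrt (2 * Real.pi) * σ))| :=
    (Real.log_le_log hA (avf_le_K hσ h0 h1 y)).trans (le_abs_self _)
  have hq2 : (0:ℝ) ≤ ((y - R0') ^ 2 + (y - R0) ^ 2) / (2 * σ ^ 2) := by positivity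
  have hlow : Real.log (1 / (Real.sqrt (2 * Real.pi) * σ)) -
      ((y - R0') ^ 2 + (y - R0) ^ 2) / (2 * σ ^ 2) ≤ Real.log (avf R0 R0' σ ε y) := by
    rcases le_total (gauss σ y R0') (gauss σ y R0) with hc | hc
    · have hge : gauss σ y R0' ≤ avf R0 R0' σ ε y := by
        unfold avf; nlinarith
      have := Real.log_le_log (gauss_pos hσ y R0') hge
      rw [log_gauss_eq hσ y R0'] at this
      have hpos : (0:ℝ) ≤ (y - R0) ^ 2 / (2 * σ ^ 2) := by positivity
      rw [add_div]
      linarith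
    · have hge : gauss σ y R0 ≤ avf R0 R0' σ ε y := by
        unfold avf; nlinarith
      have := Real.log_le_log (gauss_pos hσ y R0) hge
      rw [log_gauss_eq hσ y R0] at this
      have hpos : (0:ℝ) ≤ (y - R0') ^ 2 / (2 * σ ^ 2) := by positivity
      rw [add_div]
      linarith
  rw [abs_le]
  constructor
  · have h := neg_abs_le (Real.log (1 / (Real.sqrt (2 * Real.pi) * σ)))
    linarith
  · linarith

/-- `|log mvf|` has at most quadratic growth. -/
lemma abs_log_mvf_le (hσ : 0 < σ) (hq0 : 0 < q) (hq1 : q < 1) {ε : ℝ}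
    (h0 : 0 ≤ ε) (h1 : ε ≤ 1) (y : ℝ) :
    |Real.log (mvf R0 R0' R1 σ q ε y)| ≤
      |Real.log (1 / (Real.sqrt (2 * Real.pi) * σ))| + |Real.log q| +
        (y - R1) ^ 2 / (2 * σ ^ 2) := by
  have hM := mvf_pos (R0 := R0) (R0' := R0') (R1 := R1) hσ hq0 hq1 h0 h1 y
  have hup : Real.log (mvf R0 R0' R1 σ q ε y) ≤
      |Real.log (1 / (Real.sqrt (2 * Real.pi) * σ))| :=
    (Real.log_le_log hM (mvf_le_K hσ hq0 hq1 h0 h1 y)).trans (le_abs_self _)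
  have hq2 : (0:ℝ) ≤ (y - R1) ^ 2 / (2 * σ ^ 2) := by positivity
  have habsq : (0:ℝ) ≤ |Real.log q| := abs_nonneg _
  have hge : q * gauss σ y R1 ≤ mvf R0 R0' R1 σ q ε y := by
    unfold mvf
    nlinarith [avf_pos (R0 := R0) (R0' := R0') hσ h0 h1 y]
  have hlow := Real.log_le_log (mul_pos hq0 (gauss_pos hσ y R1)) hge
  rw [Real.log_mul hq0.ne' (gauss_pos hσ y R1).ne', log_gauss_eq hσ y R1] at hlow
  rw [abs_le]
  constructor
  · have h := neg_abs_le (Real.log (1 / (Real.sqrt (2 * Real.pi) * σ)))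
    have h2 := neg_abs_le (Real.log q)
    linarith
  · linarith

/-- integrability of a Gaussian times the quadratic weight. -/
lemma integrable_gauss_weight (hσ : 0 < σ) (m' : ℝ) :
    Integrable (fun y => gauss σ y m' *
      (1 + (y - R1) ^ 2 + (y - R0') ^ 2 + (y - R0) ^ 2)) := by
  have h := (((integrable_gauss hσ m').add (integrable_gauss_sq hσ m' R1)).add
    ((integrable_gauss_sq hσ m' R0').add (integrable_gauss_sq hσ m' R0)))
  refine h.congr (ae_of_all _ fun y => ?_)
  simp only [Pi.add_apply]
  ring

lemma measurable_avf (R0 R0' σ ε : ℝ) : Measurable (fun y => avf R0 R0' σ ε y) := by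
  unfold avf
  exact ((measurable_gauss σ R0').const_mul ε).add ((measurable_gauss σ R0).const_mul (1 - ε))

lemma measurable_mvf (R0 R0' R1 σ q ε : ℝ) : Measurable (fun y => mvf R0 R0' R1 σ q ε y) := by
  unfold mvf
  exact ((measurable_gauss σ R1).const_mul q).add ((measurable_avf R0 R0' σ ε).const_mul (1 - q))

lemma measurable_logb_div {f g : ℝ → ℝ} (hf : Measurable f) (hg : Measurable g) :
    Measurable (fun y => Real.logb 2 (f y / g y)) := by
  simp only [Real.logb]
  exact (Real.measurable_log.comp (hf.div hg)).div_const _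

lemma measurable_Ff (R0 R0' R1 σ q ε : ℝ) : Measurable (fun y => Ff R0 R0' R1 σ q ε y) := by
  unfold Ff
  exact (((measurable_gauss σ R1).const_mul q).mul
      (measurable_logb_div (measurable_gauss σ R1) (measurable_mvf R0 R0' R1 σ q ε))).add
    (((measurable_avf R0 R0' σ ε).const_mul (1 - q)).mul
      (measurable_logb_div (measurable_avf R0 R0' σ ε) (measurable_mvf R0 R0' R1 σ q ε)))

/-- `Ff` in natural-log form. -/
lemma Ff_eq_log (hσ : 0 < σ) (hq0 : 0 < q) (hq1 : q < 1) {ε : ℝ}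
    (h0 : 0 ≤ ε) (h1 : ε ≤ 1) (y : ℝ) :
    Ff R0 R0' R1 σ q ε y =
      (q * gauss σ y R1 * (Real.log (gauss σ y R1) - Real.log (mvf R0 R0' R1 σ q ε y)) +
        (1 - q) * avf R0 R0' σ ε y *
          (Real.log (avf R0 R0' σ ε y) - Real.log (mvf R0 R0' R1 σ q ε y))) / Real.log 2 := by
  have hG := gauss_pos (m := R1) hσ y
  have hA := avf_pos (R0 := R0) (R0' := R0') hσ h0 h1 y
  have hM := mvf_pos (R0 := R0) (R0' := R0') (R1 := R1) hσ hq0 hq1 h0 h1 y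
  unfold Ff
  rw [Real.logb, Real.logb, Real.log_div hG.ne' hM.ne', Real.log_div hA.ne' hM.ne']
  ring

set_option maxHeartbeats 1000000 in
/-- Integrability of the mutual-information integrand. -/
lemma integrable_Ff (hσ : 0 < σ) (hq0 : 0 < q) (hq1 : q < 1) {ε : ℝ}
    (h0 : 0 ≤ ε) (h1 : ε ≤ 1) :
    Integrable (fun y => Ff R0 R0' R1 σ q ε y) := by
  have hlog2 : 0 < Real.log 2 := Real.log_pos one_lt_two
  set K : ℝ := 1 / (Real.sqrt (2 * Real.pi) * σ) with hK
  set CL : ℝ := |Real.log K| + |Real.log q| + 2 * (2 * σ ^ 2)⁻¹ with hCL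
  have hinv : (0:ℝ) < (2 * σ ^ 2)⁻¹ := by positivity
  have hCL0 : 0 ≤ CL := by
    rw [hCL]
    have := abs_nonneg (Real.log K)
    have := abs_nonneg (Real.log q)
    linarith
  set C : ℝ := 2 * CL / Real.log 2 with hC
  have hdom : Integrable (fun y => C *
      (gauss σ y R1 * (1 + (y - R1) ^ 2 + (y - R0') ^ 2 + (y - R0) ^ 2) +
       gauss σ y R0' * (1 + (y - R1) ^ 2 + (y - R0') ^ 2 + (y - R0) ^ 2) +
       gauss σ y R0 * (1 + (y - R1) ^ 2 + (y - R0') ^ 2 + (y - R0) ^ 2))) := by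
    have h := ((integrable_gauss_weight (R0 := R0) (R0' := R0') (R1 := R1) hσ R1).add
      (integrable_gauss_weight (R0 := R0) (R0' := R0') (R1 := R1) hσ R0')).add
      (integrable_gauss_weight (R0 := R0) (R0' := R0') (R1 := R1) hσ R0)
    refine (h.const_mul C).congr (ae_of_all _ fun y => ?_)
    simp only [Pi.add_apply]
  refine hdom.mono' (measurable_Ff R0 R0' R1 σ q ε).aestronglyMeasurable
    (ae_of_all _ fun y => ?_)
  set B : ℝ := 1 + (y - R1) ^ 2 + (y - R0') ^ 2 + (y - R0) ^ 2 with hB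
  have hB1 : (1:ℝ) ≤ B := by
    rw [hB]; nlinarith [sq_nonneg (y - R1), sq_nonneg (y - R0'), sq_nonneg (y - R0)]
  have hsq1 : (y - R1) ^ 2 ≤ B := by
    rw [hB]; nlinarith [sq_nonneg (y - R0'), sq_nonneg (y - R0)]
  have hsqA : (y - R0') ^ 2 + (y - R0) ^ 2 ≤ 2 * B := by
    rw [hB]; nlinarith [sq_nonneg (y - R1), sq_nonneg (y - R0'), sq_nonneg (y - R0)]
  have habsK : (0:ℝ) ≤ |Real.log K| := abs_nonneg _
  have habsq : (0:ℝ) ≤ |Real.log q| := abs_nonneg _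
  -- three log bounds
  have bG : |Real.log (gauss σ y R1)| ≤ CL * B := by
    have h := abs_log_gauss_le hσ y R1
    rw [← hK] at h
    have hdv : (y - R1) ^ 2 / (2 * σ ^ 2) = (y - R1) ^ 2 * (2 * σ ^ 2)⁻¹ := by
      rw [div_eq_mul_inv]
    rw [hdv] at h
    rw [hCL]
    nlinarith [mul_nonneg habsK (by linarith : (0:ℝ) ≤ B - 1),
      mul_nonneg hinv.le (by linarith : (0:ℝ) ≤ 2 * B - (y - R1) ^ 2),
      mul_nonneg habsq (by linarith : (0:ℝ) ≤ B)]
  have bA : |Real.log (avf R0 R0' σ ε y)| ≤ CL * B := by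
    have h := abs_log_avf_le (R0 := R0) (R0' := R0') hσ h0 h1 y
    rw [← hK] at h
    have hdv : ((y - R0') ^ 2 + (y - R0) ^ 2) / (2 * σ ^ 2)
        = ((y - R0') ^ 2 + (y - R0) ^ 2) * (2 * σ ^ 2)⁻¹ := by
      rw [div_eq_mul_inv]
    rw [hdv] at h
    rw [hCL]
    nlinarith [mul_nonneg habsK (by linarith : (0:ℝ) ≤ B - 1),
      mul_nonneg hinv.le (by linarith : (0:ℝ) ≤ 2 * B - ((y - R0') ^ 2 + (y - R0) ^ 2)),
      mul_nonneg habsq (by linarith : (0:ℝ) ≤ B)]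
  have bM : |Real.log (mvf R0 R0' R1 σ q ε y)| ≤ CL * B := by
    have h := abs_log_mvf_le (R0 := R0) (R0' := R0') (R1 := R1) hσ hq0 hq1 h0 h1 y
    rw [← hK] at h
    have hdv : (y - R1) ^ 2 / (2 * σ ^ 2) = (y - R1) ^ 2 * (2 * σ ^ 2)⁻¹ := by
      rw [div_eq_mul_inv]
    rw [hdv] at h
    rw [hCL]
    nlinarith [mul_nonneg habsK (by linarith : (0:ℝ) ≤ B - 1),
      mul_nonneg hinv.le (by linarith : (0:ℝ) ≤ 2 * B - (y - R1) ^ 2),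
      mul_nonneg habsq (by linarith : (0:ℝ) ≤ B - 1)]
  -- assemble
  have hG := gauss_pos (m := R1) hσ y
  have hA := avf_pos (R0 := R0) (R0' := R0') hσ h0 h1 y
  have hAadd := avf_le_add (R0 := R0) (R0' := R0') hσ h0 h1 y
  have hgA := gauss_pos (m := R0') hσ y
  have hgB := gauss_pos (m := R0) hσ y
  rw [Real.norm_eq_abs, Ff_eq_log hσ hq0 hq1 h0 h1 y, abs_div, abs_of_pos hlog2,
    div_le_iff₀ hlog2]
  have tri1 : |Real.log (gauss σ y R1) - Real.log (mvf R0 R0' R1 σ q ε y)|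
      ≤ 2 * (CL * B) := by
    rw [sub_eq_add_neg]
    refine (abs_add_le _ _).trans ?_
    rw [abs_neg]; linarith
  have tri2 : |Real.log (avf R0 R0' σ ε y) - Real.log (mvf R0 R0' R1 σ q ε y)|
      ≤ 2 * (CL * B) := by
    rw [sub_eq_add_neg]
    refine (abs_add_le _ _).trans ?_
    rw [abs_neg]; linarith
  have hnum : |q * gauss σ y R1 *
        (Real.log (gauss σ y R1) - Real.log (mvf R0 R0' R1 σ q ε y)) +
      (1 - q) * avf R0 R0' σ ε y *
        (Real.log (avf R0 R0' σ ε y) - Real.log (mvf R0 R0' R1 σ q ε y))|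
      ≤ q * gauss σ y R1 * (2 * (CL * B)) + (1 - q) * avf R0 R0' σ ε y * (2 * (CL * B)) := by
    refine (abs_add_le _ _).trans ?_
    have e1 : |q * gauss σ y R1 *
        (Real.log (gauss σ y R1) - Real.log (mvf R0 R0' R1 σ q ε y))| =
        q * gauss σ y R1 *
          |Real.log (gauss σ y R1) - Real.log (mvf R0 R0' R1 σ q ε y)| := by
      rw [abs_mul, abs_of_pos (mul_pos hq0 hG)]
    have e2 : |(1 - q) * avf R0 R0' σ ε y *
        (Real.log (avf R0 R0' σ ε y) - Real.log (mvf R0 R0' R1 σ q ε y))| =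
        (1 - q) * avf R0 R0' σ ε y *
          |Real.log (avf R0 R0' σ ε y) - Real.log (mvf R0 R0' R1 σ q ε y)| := by
      rw [abs_mul, abs_of_pos (mul_pos (show (0:ℝ) < 1 - q by linarith) hA)]
    rw [e1, e2]
    have m1 := mul_le_mul_of_nonneg_left tri1 (mul_pos hq0 hG).le
    have m2 := mul_le_mul_of_nonneg_left tri2 (mul_pos (show (0:ℝ) < 1 - q by linarith) hA).le
    linarith
  refine hnum.trans ?_
  have hBpos : (0:ℝ) ≤ B := by linarith
  have hCLB : (0:ℝ) ≤ CL * B := mul_nonneg hCL0 hBpos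
  have step1 : q * gauss σ y R1 * (2 * (CL * B)) +
      (1 - q) * avf R0 R0' σ ε y * (2 * (CL * B)) ≤
      2 * (CL * B) * (gauss σ y R1 + (gauss σ y R0' + gauss σ y R0)) := by
    nlinarith [mul_nonneg hCLB (show (0:ℝ) ≤ (1 - q) * gauss σ y R1 by nlinarith),
      mul_nonneg hCLB (show (0:ℝ) ≤ (gauss σ y R0' + gauss σ y R0) - (1 - q) * avf R0 R0' σ ε y
        by nlinarith)]
  have step2 : 2 * (CL * B) * (gauss σ y R1 + (gauss σ y R0' + gauss σ y R0)) =
      C * (gauss σ y R1 * B + gauss σ y R0' * B + gauss σ y R0 * B) * Real.log 2 := by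
    rw [hC]
    field_simp
    ring
  linarith

set_option maxHeartbeats 1000000 in
/-- Integrability of the linearization term `D`. -/
lemma integrable_D (hσ : 0 < σ) (hq0 : 0 < q) (hq1 : q < 1) {ε1 ε2 : ℝ}
    (he0 : 0 ≤ ε1) (he12 : ε1 ≤ ε2) (he2 : ε2 ≤ 1) :
    Integrable (fun y => (1 - q) * ((ε2 - ε1) * (gauss σ y R0 - gauss σ y R0')) *
      (Real.log (avf R0 R0' σ ε2 y) - Real.log (mvf R0 R0' R1 σ q ε2 y)) / Real.log 2) := by
  have hlog2 : 0 < Real.log 2 := Real.log_pos one_lt_two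
  have he20 : 0 ≤ ε2 := he0.trans he12
  set K : ℝ := 1 / (Real.sqrt (2 * Real.pi) * σ) with hK
  set CL : ℝ := |Real.log K| + |Real.log q| + 2 * (2 * σ ^ 2)⁻¹ with hCL
  have hinv : (0:ℝ) < (2 * σ ^ 2)⁻¹ := by positivity
  have hCL0 : 0 ≤ CL := by
    rw [hCL]
    have := abs_nonneg (Real.log K)
    have := abs_nonneg (Real.log q)
    linarith
  set C : ℝ := 2 * CL / Real.log 2 with hC
  have hdom : Integrable (fun y => C *
      (gauss σ y R1 * (1 + (y - R1) ^ 2 + (y - R0') ^ 2 + (y - R0) ^ 2) +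
       gauss σ y R0' * (1 + (y - R1) ^ 2 + (y - R0') ^ 2 + (y - R0) ^ 2) +
       gauss σ y R0 * (1 + (y - R1) ^ 2 + (y - R0') ^ 2 + (y - R0) ^ 2))) := by
    have h := ((integrable_gauss_weight (R0 := R0) (R0' := R0') (R1 := R1) hσ R1).add
      (integrable_gauss_weight (R0 := R0) (R0' := R0') (R1 := R1) hσ R0')).add
      (integrable_gauss_weight (R0 := R0) (R0' := R0') (R1 := R1) hσ R0)
    refine (h.const_mul C).congr (ae_of_all _ fun y => ?_)
    simp only [Pi.add_apply]
  have hmeas : Measurable (fun y => (1 - q) * ((ε2 - ε1) * (gauss σ y R0 - gauss σ y R0')) *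
      (Real.log (avf R0 R0' σ ε2 y) - Real.log (mvf R0 R0' R1 σ q ε2 y)) / Real.log 2) := by
    refine Measurable.div_const ?_ _
    exact ((((measurable_gauss σ R0).sub (measurable_gauss σ R0')).const_mul
      (ε2 - ε1)).const_mul (1 - q)).mul
      ((Real.measurable_log.comp (measurable_avf R0 R0' σ ε2)).sub
        (Real.measurable_log.comp (measurable_mvf R0 R0' R1 σ q ε2)))
  refine hdom.mono' hmeas.aestronglyMeasurable (ae_of_all _ fun y => ?_)
  set B : ℝ := 1 + (y - R1) ^ 2 + (y - R0') ^ 2 + (y - R0) ^ 2 with hB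
  have hB1 : (1:ℝ) ≤ B := by
    rw [hB]; nlinarith [sq_nonneg (y - R1), sq_nonneg (y - R0'), sq_nonneg (y - R0)]
  have hsq1 : (y - R1) ^ 2 ≤ B := by
    rw [hB]; nlinarith [sq_nonneg (y - R0'), sq_nonneg (y - R0)]
  have hsqA : (y - R0') ^ 2 + (y - R0) ^ 2 ≤ 2 * B := by
    rw [hB]; nlinarith [sq_nonneg (y - R1), sq_nonneg (y - R0'), sq_nonneg (y - R0)]
  have habsK : (0:ℝ) ≤ |Real.log K| := abs_nonneg _
  have habsq : (0:ℝ) ≤ |Real.log q| := abs_nonneg _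
  have bA : |Real.log (avf R0 R0' σ ε2 y)| ≤ CL * B := by
    have h := abs_log_avf_le (R0 := R0) (R0' := R0') hσ he20 he2 y
    rw [← hK] at h
    have hdv : ((y - R0') ^ 2 + (y - R0) ^ 2) / (2 * σ ^ 2)
        = ((y - R0') ^ 2 + (y - R0) ^ 2) * (2 * σ ^ 2)⁻¹ := by
      rw [div_eq_mul_inv]
    rw [hdv] at h
    rw [hCL]
    nlinarith [mul_nonneg habsK (by linarith : (0:ℝ) ≤ B - 1),
      mul_nonneg hinv.le (by linarith : (0:ℝ) ≤ 2 * B - ((y - R0') ^ 2 + (y - R0) ^ 2)),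
      mul_nonneg habsq (by linarith : (0:ℝ) ≤ B)]
  have bM : |Real.log (mvf R0 R0' R1 σ q ε2 y)| ≤ CL * B := by
    have h := abs_log_mvf_le (R0 := R0) (R0' := R0') (R1 := R1) hσ hq0 hq1 he20 he2 y
    rw [← hK] at h
    have hdv : (y - R1) ^ 2 / (2 * σ ^ 2) = (y - R1) ^ 2 * (2 * σ ^ 2)⁻¹ := by
      rw [div_eq_mul_inv]
    rw [hdv] at h
    rw [hCL]
    nlinarith [mul_nonneg habsK (by linarith : (0:ℝ) ≤ B - 1),
      mul_nonneg hinv.le (by linarith : (0:ℝ) ≤ 2 * B - (y - R1) ^ 2),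
      mul_nonneg habsq (by linarith : (0:ℝ) ≤ B - 1)]
  have hG := gauss_pos (m := R1) hσ y
  have hgA := gauss_pos (m := R0') hσ y
  have hgB := gauss_pos (m := R0) hσ y
  have hBpos : (0:ℝ) ≤ B := by linarith
  have hCLB : (0:ℝ) ≤ CL * B := mul_nonneg hCL0 hBpos
  rw [Real.norm_eq_abs, abs_div, abs_of_pos hlog2, div_le_iff₀ hlog2]
  have tri : |Real.log (avf R0 R0' σ ε2 y) - Real.log (mvf R0 R0' R1 σ q ε2 y)|
      ≤ 2 * (CL * B) := by
    rw [sub_eq_add_neg]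
    refine (abs_add_le _ _).trans ?_
    rw [abs_neg]; linarith
  have habs1 : |(1 - q) * ((ε2 - ε1) * (gauss σ y R0 - gauss σ y R0'))|
      ≤ gauss σ y R0' + gauss σ y R0 := by
    rw [abs_mul, abs_mul, abs_of_nonneg (by linarith : (0:ℝ) ≤ 1 - q),
      abs_of_nonneg (by linarith : (0:ℝ) ≤ ε2 - ε1)]
    have h1 : |gauss σ y R0 - gauss σ y R0'| ≤ gauss σ y R0' + gauss σ y R0 := by
      rw [abs_le]; constructor <;> linarith
    nlinarith [abs_nonneg (gauss σ y R0 - gauss σ y R0'),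
      mul_nonneg (show (0:ℝ) ≤ 1 - (1 - q) * (ε2 - ε1) by nlinarith)
        (abs_nonneg (gauss σ y R0 - gauss σ y R0'))]
  have hfull : |(1 - q) * ((ε2 - ε1) * (gauss σ y R0 - gauss σ y R0')) *
      (Real.log (avf R0 R0' σ ε2 y) - Real.log (mvf R0 R0' R1 σ q ε2 y))|
      ≤ (gauss σ y R0' + gauss σ y R0) * (2 * (CL * B)) := by
    rw [abs_mul]
    have := mul_le_mul habs1 tri (abs_nonneg _) (by linarith)
    linarith
  refine hfull.trans ?_
  have step2 : C * (gauss σ y R1 * B + gauss σ y R0' * B + gauss σ y R0 * B) * Real.log 2 =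
      2 * (CL * B) * (gauss σ y R1 + (gauss σ y R0' + gauss σ y R0)) := by
    rw [hC]
    field_simp
    ring
  rw [step2]
  nlinarith [mul_nonneg hCLB hG.le]

set_option maxHeartbeats 1000000 in
/-- Monotonicity of `Cq` in `ε`. -/
lemma Cq_mono (hσ : 0 < σ) (h1 : R1 < R0') (h2 : R0' < R0) (hq0 : 0 < q) (hq1 : q < 1)
    {ε1 ε2 : ℝ} (he0 : 0 ≤ ε1) (he12 : ε1 ≤ ε2) (he2 : ε2 ≤ 1) :
    Cq R0 R0' R1 σ q ε2 ≤ Cq R0 R0' R1 σ q ε1 := by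
  have he1' : ε1 ≤ 1 := he12.trans he2
  have he20 : 0 ≤ ε2 := he0.trans he12
  have hlog2 : 0 < Real.log 2 := Real.log_pos one_lt_two
  set D : ℝ → ℝ := fun y => (1 - q) * ((ε2 - ε1) * (gauss σ y R0 - gauss σ y R0')) *
    (Real.log (avf R0 R0' σ ε2 y) - Real.log (mvf R0 R0' R1 σ q ε2 y)) / Real.log 2 with hD
  have hIntF1 := integrable_Ff (R0 := R0) (R0' := R0') (R1 := R1) hσ hq0 hq1 he0 he1'
  have hIntF2 := integrable_Ff (R0 := R0) (R0' := R0') (R1 := R1) hσ hq0 hq1 he20 he2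
  have hIntD : Integrable D :=
    integrable_D (R0 := R0) (R0' := R0') (R1 := R1) hσ hq0 hq1 he0 he12 he2
  -- pointwise linearization bound
  have hpoint : ∀ y, D y ≤ Ff R0 R0' R1 σ q ε1 y - Ff R0 R0' R1 σ q ε2 y := by
    intro y
    have hG := gauss_pos (m := R1) hσ y
    have hA1 := avf_pos (R0 := R0) (R0' := R0') hσ he0 he1' y
    have hA2 := avf_pos (R0 := R0) (R0' := R0') hσ he20 he2 y
    have hconv := pointwise_convex (q := q) (G := gauss σ y R1)
      (A1 := avf R0 R0' σ ε1 y) (A2 := avf R0 R0' σ ε2 y) hq0 hq1 hG hA1 hA2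
    have hdiff : avf R0 R0' σ ε1 y - avf R0 R0' σ ε2 y
        = (ε2 - ε1) * (gauss σ y R0 - gauss σ y R0') := by
      unfold avf; ring
    rw [Ff_eq_log hσ hq0 hq1 he0 he1' y, Ff_eq_log hσ hq0 hq1 he20 he2 y]
    simp only [hD]
    rw [div_sub_div_same]
    rw [div_le_div_iff₀ hlog2 hlog2]
    rw [hdiff] at hconv
    unfold mvf
    nlinarith [hconv, hlog2]
  have hmono := integral_mono hIntD (hIntF1.sub hIntF2) hpoint
  -- nonnegativity of `∫ D` by the reflection/monotone-likelihood-ratio argument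
  set c : ℝ := (R0' + R0) / 2 with hcdef
  have hcc : R0' + R0 = 2 * c := by rw [hcdef]; ring
  have hf : Integrable (fun u => D (c + u)) := hIntD.comp_add_left c
  have hptw : ∀ u ∈ Set.Ioi (0:ℝ), 0 ≤ D (c + -u) + D (c + u) := by
    intro u hu
    have hu0 : (0:ℝ) ≤ u := (Set.mem_Ioi.1 hu).le
    have hcu : c + -u = c - u := by ring
    rw [hcu]
    -- reflection identities
    have r1 : gauss σ (c - u) R0 = gauss σ (c + u) R0' := gauss_reflect hcc u
    have r2 : gauss σ (c - u) R0' = gauss σ (c + u) R0 :=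
      gauss_reflect (by linarith : R0 + R0' = 2 * c) u
    -- MLR monotonicity of the log-likelihood term
    have hle : c - u ≤ c + u := by linarith
    have mlrA : gauss σ (c + u) R1 * gauss σ (c - u) R0' ≤
        gauss σ (c - u) R1 * gauss σ (c + u) R0' := gauss_mlr hσ h1.le hle
    have mlrB : gauss σ (c + u) R1 * gauss σ (c - u) R0 ≤
        gauss σ (c - u) R1 * gauss σ (c + u) R0 := gauss_mlr hσ (h1.trans h2).le hle
    have hA' : avf R0 R0' σ ε2 (c - u) * gauss σ (c + u) R1 ≤
        avf R0 R0' σ ε2 (c + u) * gauss σ (c - u) R1 := by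
      unfold avf
      nlinarith [mul_le_mul_of_nonneg_left mlrA he20,
        mul_le_mul_of_nonneg_left mlrB (by linarith : (0:ℝ) ≤ 1 - ε2)]
    have hprod : avf R0 R0' σ ε2 (c - u) * mvf R0 R0' R1 σ q ε2 (c + u) ≤
        avf R0 R0' σ ε2 (c + u) * mvf R0 R0' R1 σ q ε2 (c - u) := by
      unfold mvf
      nlinarith [mul_le_mul_of_nonneg_left hA' hq0.le]
    have hAm := avf_pos (R0 := R0) (R0' := R0') hσ he20 he2 (c - u)
    have hAp := avf_pos (R0 := R0) (R0' := R0') hσ he20 he2 (c + u)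
    have hMm := mvf_pos (R0 := R0) (R0' := R0') (R1 := R1) hσ hq0 hq1 he20 he2 (c - u)
    have hMp := mvf_pos (R0 := R0) (R0' := R0') (R1 := R1) hσ hq0 hq1 he20 he2 (c + u)
    have hlp := Real.log_le_log (mul_pos hAm hMp) hprod
    rw [Real.log_mul hAm.ne' hMp.ne', Real.log_mul hAp.ne' hMm.ne'] at hlp
    have hψ : Real.log (avf R0 R0' σ ε2 (c - u)) - Real.log (mvf R0 R0' R1 σ q ε2 (c - u)) ≤
        Real.log (avf R0 R0' σ ε2 (c + u)) - Real.log (mvf R0 R0' R1 σ q ε2 (c + u)) := by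
      linarith
    have hBA : gauss σ (c + u) R0' ≤ gauss σ (c + u) R0 :=
      gauss_right_ge hσ h2.le hcc hu0
    simp only [hD]
    rw [r1, r2, ← add_div]
    apply div_nonneg _ hlog2.le
    nlinarith [mul_nonneg (mul_nonneg (mul_nonneg
      (by linarith : (0:ℝ) ≤ 1 - q) (by linarith : (0:ℝ) ≤ ε2 - ε1))
      (sub_nonneg.2 hBA)) (sub_nonneg.2 hψ)]
  have hnn : 0 ≤ ∫ y, D y := by
    have step0 : 0 ≤ ∫ u in Set.Ioi (0:ℝ), (D (c + -u) + D (c + u)) :=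
      setIntegral_nonneg measurableSet_Ioi hptw
    have stepadd : (∫ u in Set.Ioi (0:ℝ), (D (c + -u) + D (c + u)))
        = (∫ u in Set.Ioi (0:ℝ), D (c + -u)) + ∫ u in Set.Ioi (0:ℝ), D (c + u) :=
      integral_add (hf.comp_neg.integrableOn) hf.integrableOn
    have hneg : (∫ u in Set.Ioi (0:ℝ), D (c + -u)) = ∫ u in Set.Iic (0:ℝ), D (c + u) := by
      have h := integral_comp_neg_Ioi (0:ℝ) (fun u => D (c + u))
      simpa using h
    have hsplit : (∫ u in Set.Iic (0:ℝ), D (c + u)) + (∫ u in Set.Ioi (0:ℝ), D (c + u))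
        = ∫ u, D (c + u) :=
      intervalIntegral.integral_Iic_add_Ioi hf.integrableOn hf.integrableOn
    have htrans : (∫ u, D (c + u)) = ∫ y, D y :=
      MeasureTheory.integral_add_left_eq_self D c
    rw [stepadd, hneg] at step0
    rw [← htrans, ← hsplit]
    exact step0
  rw [Cq_eq, Cq_eq]
  simp only [Pi.sub_apply] at hmono
  rw [integral_sub hIntF1 hIntF2] at hmono
  linarith

end main

/-- for fixed Bernoulli(q) input and fixed `σ > 0`, the mutual information
`C_q(ε,σ)` is non-increasing in `ε` on `[0,1]`; in particular
`C_q(1,σ) ≤ C_q(ε,σ) ≤ C_q(0,σ)` for all `ε ∈ [0,1]`. -/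
theorem Cq_antitone_in_eps (R0 R0' R1 σ q : ℝ) (hσ : 0 < σ)
    (h1 : R1 < R0') (h2 : R0' < R0) (hq0 : 0 < q) (hq1 : q < 1) :
    AntitoneOn (fun ε => Cq R0 R0' R1 σ q ε) (Set.Icc 0 1) ∧
    ∀ ε ∈ Set.Icc (0 : ℝ) 1,
      Cq R0 R0' R1 σ q 1 ≤ Cq R0 R0' R1 σ q ε ∧
      Cq R0 R0' R1 σ q ε ≤ Cq R0 R0' R1 σ q 0 := by
  constructor
  · intro a ha b hb hab
    exact Cq_mono hσ h1 h2 hq0 hq1 ha.1 hab hb.2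
  · intro ε hε
    exact ⟨Cq_mono hσ h1 h2 hq0 hq1 hε.1 hε.2 le_rfl,
      Cq_mono hσ h1 h2 hq0 hq1 le_rfl hε.1 hε.2⟩
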